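/- Let α ∈ F^n have pairwise distinct entries. Then the twisted Reed–Solomon code TRS_{k,n}[α,t,h,η] has F-dimension exactly k. -/
import Mathlib


open Polynomial

/-- Evaluation vector: `ev_α(f) = (f(α₁),…,f(α_n))`. -/
noncomputable def evalVec {F : Type*} [Field F] {n : ℕ} (α : Fin n → F) (f : F[X]) :
    Fin n → F :=
  fun i => f.eval (α i)

/-- The twisted polynomial with coefficient vector `u`:
`Σ_{i=0}^{k−1} u_i X^i + Σ_{j=1}^{ℓ} η_j u_{h_j} X^{k−1+t_j}`. -/
noncomputable def twistedPoly {F : Type*} [Field F] (k ℓ : ℕ) (t : Fin ℓ → ℕ)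
    (h : Fin ℓ → Fin k) (η : Fin ℓ → F) (u : Fin k → F) : F[X] :=
  (∑ i : Fin k, Polynomial.C (u i) * Polynomial.X ^ (i : ℕ))
    + ∑ j : Fin ℓ, Polynomial.C (η j * u (h j)) * Polynomial.X ^ (k - 1 + t j)

/-- The space of twisted polynomials `P_{k,n}[t,h,η]`. -/
def twistedPolySet (F : Type*) [Field F] (k ℓ : ℕ) (t : Fin ℓ → ℕ)
    (h : Fin ℓ → Fin k) (η : Fin ℓ → F) : Set F[X] :=
  { p | ∃ u : Fin k → F, p = twistedPoly k ℓ t h η u }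

/-- The twisted Reed–Solomon code `TRS_{k,n}[α,t,h,η]`, as a subset of `F^n`. -/
def TRS {F : Type*} [Field F] {n : ℕ} (α : Fin n → F) (k ℓ : ℕ) (t : Fin ℓ → ℕ)
    (h : Fin ℓ → Fin k) (η : Fin ℓ → F) : Set (Fin n → F) :=
  { c | ∃ u : Fin k → F, c = evalVec α (twistedPoly k ℓ t h η u) }

/-- The Reed–Solomon code `RS_{k,n}[α]`, as a subset of `F^n`. -/
def RS {F : Type*} [Field F] {n : ℕ} (α : Fin n → F) (k : ℕ) : Set (Fin n → F) :=
  { c | ∃ f : F[X], f.degree ≤ ((k - 1 : ℕ) : WithBot ℕ) ∧ c = evalVec α f }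

/-- The encoding map as a linear map. -/
noncomputable def TRSmap {F : Type*} [Field F] {n : ℕ} (α : Fin n → F) (k ℓ : ℕ)
    (t : Fin ℓ → ℕ) (h : Fin ℓ → Fin k) (η : Fin ℓ → F) :
    (Fin k → F) →ₗ[F] (Fin n → F) where
  toFun u := evalVec α (twistedPoly k ℓ t h η u)
  map_add' u v := by
    funext i
    simp only [evalVec, twistedPoly, eval_add, eval_finset_sum, eval_mul, eval_C, eval_pow,
      eval_X, Pi.add_apply, mul_add, add_mul, Finset.sum_add_distrib]
    ring
  map_smul' c u := by
    funext i
    simp only [evalVec, twistedPoly, eval_add, eval_finset_sum, eval_mul, eval_C, eval_pow,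
      eval_X, Pi.smul_apply, smul_eq_mul, RingHom.id_apply, Finset.mul_sum, mul_add]
    congr 1 <;> exact Finset.sum_congr rfl fun x _ => by ring

lemma twistedPoly_natDegree_lt {F : Type*} [Field F] {n k ℓ : ℕ}
    (hk : 1 ≤ k) (hkn : k ≤ n) (t : Fin ℓ → ℕ) (htr : ∀ j, 1 ≤ t j ∧ t j ≤ n - k)
    (h : Fin ℓ → Fin k) (η : Fin ℓ → F) (u : Fin k → F) :
    (twistedPoly k ℓ t h η u).natDegree < n := by
  have hb : ∀ j : Fin ℓ, k - 1 + t j ≤ n - 1 := by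
    intro j
    have h1 := (htr j).1
    have h2 := (htr j).2
    omega
  refine lt_of_le_of_lt (natDegree_add_le _ _) ?_
  have hn1 : n - 1 < n := by omega
  refine lt_of_le_of_lt (max_le ?_ ?_) hn1
  · refine natDegree_sum_le_of_forall_le _ _ fun i _ => ?_
    refine le_trans (natDegree_C_mul_le _ _) ?_
    simp only [natDegree_X_pow]
    omega
  · refine natDegree_sum_le_of_forall_le _ _ fun j _ => ?_
    refine le_trans (natDegree_C_mul_le _ _) ?_
    simp only [natDegree_X_pow]
    exact hb j

lemma twistedPoly_coeff_lt {F : Type*} [Field F] {k ℓ : ℕ}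
    (t : Fin ℓ → ℕ) (htr : ∀ j, 1 ≤ t j)
    (h : Fin ℓ → Fin k) (η : Fin ℓ → F) (u : Fin k → F) (i : Fin k) :
    (twistedPoly k ℓ t h η u).coeff i = u i := by
  classical
  have hik : (i : ℕ) < k := i.2
  simp only [twistedPoly, coeff_add, finset_sum_coeff, coeff_C_mul, coeff_X_pow]
  rw [Finset.sum_eq_single i]
  · have : ∀ j : Fin ℓ, ¬ ((i : ℕ) = k - 1 + t j) := by
      intro j
      have := htr j
      omega
    simp [this]
  · intro b _ hb
    have : (i : ℕ) ≠ (b : ℕ) := fun hc => hb (Fin.ext hc.symm)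
    simp [this]
  · simp

/-- for α with pairwise distinct entries, the twisted Reed–Solomon code
TRS_{k,n}[α,t,h,η] has F-dimension exactly k. -/
theorem TRS_finrank
    {F : Type*} [Field F] {n k ℓ : ℕ}
    (hk : 1 ≤ k) (hkn : k ≤ n) (hℓ : 1 ≤ ℓ)
    (t : Fin ℓ → ℕ) (htinj : Function.Injective t)
    (htr : ∀ j, 1 ≤ t j ∧ t j ≤ n - k)
    (h : Fin ℓ → Fin k) (hhinj : Function.Injective h)
    (η : Fin ℓ → F) (hη : ∀ j, η j ≠ 0)
    (α : Fin n → F) (hα : Function.Injective α) :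
    Module.finrank F (Submodule.span F (TRS α k ℓ t h η)) = k := by
  have hset : TRS α k ℓ t h η = Set.range (TRSmap α k ℓ t h η) := by
    ext c
    constructor
    · rintro ⟨u, rfl⟩; exact ⟨u, rfl⟩
    · rintro ⟨u, rfl⟩; exact ⟨u, rfl⟩
  have hrange : (Set.range (TRSmap α k ℓ t h η)) =
      (LinearMap.range (TRSmap α k ℓ t h η) : Set (Fin n → F)) := by
    simp [LinearMap.coe_range]
  rw [hset, hrange, Submodule.span_eq]
  have hinj : Function.Injective (TRSmap α k ℓ t h η) := by
    rw [← LinearMap.ker_eq_bot, LinearMap.ker_eq_bot']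
    intro u hu
    have heval : ∀ i : Fin n, (twistedPoly k ℓ t h η u).eval (α i) = 0 := by
      intro i
      have := congrFun hu i
      simpa [TRSmap, evalVec] using this
    have hp0 : twistedPoly k ℓ t h η u = 0 :=
      Polynomial.eq_zero_of_natDegree_lt_card_of_eval_eq_zero _ hα heval
        (by simpa using twistedPoly_natDegree_lt hk hkn t htr h η u)
    funext i
    have := twistedPoly_coeff_lt t (fun j => (htr j).1) h η u i
    rw [hp0] at this
    simpa using this.symm
  rw [LinearMap.finrank_range_of_inj hinj]
  simp
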